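/- For all positive rationals p < q < 1 there is no Weihrauch reduction of p-WWKL to q-WWKL: there do not exist Turing functionals Φ, Ψ such that for every tree T ⊆ 2^{<ω} with |T ∩ 2^n| ≥ p·2^n for all n, Φ(T) is a tree with |Φ(T) ∩ 2^n| ≥ q·2^n for all n, and for every infinite path X of Φ(T), Ψ(T, X) is an infinite path of T. -/

import Mathlib

/-- A (total-style) Turing functional, given by a computable, monotone
approximation function mapping finite oracle prefixes to output values. -/
structure TuringFunctional where
  approx : List ℕ → ℕ → Option ℕ
  computable : Computable₂ approx
  mono : ∀ {l₁ l₂ : List ℕ} {n a : ℕ}, l₁ <+: l₂ → approx l₁ n = some a → approx l₂ n = some a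

/-- `Φ.evalsTo X Y` means the functional `Φ` with oracle `X` converges everywhere
and computes the total function `Y`. -/
def TuringFunctional.evalsTo (Φ : TuringFunctional) (X Y : ℕ → ℕ) : Prop :=
  ∀ n, ∃ m, Φ.approx ((List.range m).map X) n = some (Y n)

/-- Effective join of two oracles. -/
def join2 (X Y : ℕ → ℕ) : ℕ → ℕ := fun n => if n % 2 = 0 then X (n / 2) else Y (n / 2)

/-- Code a boolean-valued function (a set) as an oracle. -/
def bc (X : ℕ → Bool) : ℕ → ℕ := fun n => Bool.toNat (X n)

/-- Effective join of a countable sequence of sets into a single oracle. -/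
def seqJoin (A : ℕ → ℕ → Bool) : ℕ → ℕ := fun n => Bool.toNat (A n.unpair.1 n.unpair.2)

/-- Trees as boolean predicates on finite binary strings, closed under prefixes. -/
def IsTreeB (T : List Bool → Bool) : Prop :=
  ∀ l, T l = true → ∀ l', l' <+: l → T l' = true

/-- The number of strings of length `n` in the tree `T`. -/
def levelCard (T : List Bool → Bool) (n : ℕ) : ℕ :=
  (Finset.univ.filter fun v : Fin n → Bool => T (List.ofFn v) = true).card

/-- The code of a tree as an oracle: its characteristic function on codes of strings. -/
def treeCode (T : List Bool → Bool) : ℕ → ℕ := fun e =>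
  match (Encodable.decode (α := List Bool) e) with
  | some l => Bool.toNat (T l)
  | none => 0

/-- `X` is an infinite path through `T`. -/
def pathB (T : List Bool → Bool) (X : ℕ → Bool) : Prop :=
  ∀ n, T ((List.range n).map X) = true

/- ======================= auxiliary machinery ======================= -/

open scoped Classical

noncomputable section WWKLAux

namespace WWKLAux

/-- The hyperfilter (an ultrafilter extending the cofinite filter) on `ℕ`. -/
abbrev UU : Ultrafilter ℕ := Filter.hyperfilter ℕ

/-- Limit of a boolean sequence along the ultrafilter. -/
def ulim (g : ℕ → Bool) : Bool := if {v | g v = true} ∈ UU then true else false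

lemma ulim_true_iff (g : ℕ → Bool) : ulim g = true ↔ {v | g v = true} ∈ UU := by
  unfold ulim; split <;> simp_all

lemma ulim_spec (g : ℕ → Bool) : {v | g v = ulim g} ∈ UU := by
  cases hb : ulim g
  · have h : {v | g v = true} ∉ UU := fun hc => by
      rw [(ulim_true_iff g).2 hc] at hb; exact Bool.noConfusion hb
    have h2 : ({v | g v = true} : Set ℕ)ᶜ ∈ UU := Ultrafilter.compl_mem_iff_notMem.2 h
    refine Filter.mem_of_superset h2 ?_
    intro v hv
    simpa using hv
  · exact (ulim_true_iff g).1 hb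

lemma UU_nonempty {s : Set ℕ} (h : s ∈ UU) : s.Nonempty :=
  Filter.nonempty_of_mem h

lemma ulim_const {g : ℕ → Bool} {b : Bool} (h : ∀ v, g v = b) : ulim g = b := by
  cases b
  · cases hb : ulim g
    · rfl
    · have hU := (ulim_true_iff g).1 hb
      rcases UU_nonempty hU with ⟨v, hv⟩
      simp only [Set.mem_setOf_eq, h v] at hv
      exact Bool.noConfusion hv
  · apply (ulim_true_iff g).2
    have : {v | g v = true} = Set.univ := by ext v; simp [h v]
    rw [this]; exact Filter.univ_mem

/-- Agreement on a finite set of coordinates is ultrafilter-large. -/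
lemma ulim_agree {α : Type*} (F : ℕ → α → Bool) (s : Finset α) :
    {v | ∀ a ∈ s, F v a = ulim (fun v => F v a)} ∈ UU := by
  induction s using Finset.induction with
  | empty =>
    have : {v : ℕ | ∀ a ∈ (∅ : Finset _), F v a = ulim (fun v => F v a)} = Set.univ := by
      ext v; simp
    rw [this]; exact Filter.univ_mem
  | @insert a s ha ih =>
    have h1 := ulim_spec (fun v => F v a)
    refine Filter.mem_of_superset (Filter.inter_mem h1 ih) ?_
    rintro v ⟨hv1, hv2⟩ b hb
    rcases Finset.mem_insert.1 hb with rfl | hb'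
    · exact hv1
    · exact hv2 b hb'

lemma cofinite_mem (m : ℕ) : {v : ℕ | m ≤ v} ∈ UU := by
  have : {v : ℕ | m ≤ v} ∈ (Filter.cofinite : Filter ℕ) := by
    rw [Filter.mem_cofinite]
    have : {v : ℕ | m ≤ v}ᶜ = {v | v < m} := by ext v; simp [not_le]
    rw [this]; exact Set.finite_lt_nat m
  exact Filter.hyperfilter_le_cofinite this


/-- finite pigeonhole along the ultrafilter -/
lemma ulim_pigeonhole {f : ℕ → ℕ} {n : ℕ} (hf : ∀ v, f v < n) :
    ∃ j < n, {v | f v = j} ∈ UU := by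
  by_contra hcon
  push_neg at hcon
  have hint : (⋂ j ∈ {j : ℕ | j < n}, ({v : ℕ | f v = j} : Set ℕ)ᶜ) ∈ UU := by
    refine (Filter.biInter_mem (Set.finite_lt_nat n)).2 ?_
    intro j hj
    exact Ultrafilter.compl_mem_iff_notMem.2 (hcon j hj)
  rcases UU_nonempty hint with ⟨v, hv⟩
  simp only [Set.mem_iInter, Set.mem_compl_iff, Set.mem_setOf_eq] at hv
  exact hv (f v) (hf v) rfl

/- ================= list helpers ================= -/

lemma rangeMap_prefix {α : Type*} (f : ℕ → α) {a b : ℕ} (h : a ≤ b) :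
    (List.range a).map f <+: (List.range b).map f := by
  have h1 : List.range a = List.take a (List.range b) := by
    rw [List.take_range]; congr 1; omega
  rw [h1, List.map_take]
  exact List.take_prefix _ _

lemma mapRange_congr {α : Type*} {f g : ℕ → α} {m : ℕ} (h : ∀ i < m, f i = g i) :
    (List.range m).map f = (List.range m).map g := by
  apply List.map_congr_left
  intro i hi
  exact h i (List.mem_range.1 hi)

lemma ofFn_eq_mapRange (n : ℕ) (f : ℕ → Bool) :
    List.ofFn (fun k : Fin n => f k) = (List.range n).map f := by
  apply List.ext_getElem
  · simp
  · intro i h1 h2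
    simp

lemma prefix_take_eq {l' l : List Bool} (h : l' <+: l) {n : ℕ} (hn : n ≤ l'.length) :
    l'.take n = l.take n := by
  rcases h with ⟨t, rfl⟩
  rw [List.take_append_of_le_length hn]


/- ================= functional helpers ================= -/

lemma approx_unique (Φ : TuringFunctional) (o : ℕ → ℕ) {a b k x y : ℕ}
    (h1 : Φ.approx ((List.range a).map o) k = some x)
    (h2 : Φ.approx ((List.range b).map o) k = some y) : x = y := by
  rcases le_total a b with h | h
  · have h3 := Φ.mono (rangeMap_prefix o h) h1
    rw [h3] at h2
    exact Option.some_inj.1 h2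
  · have h3 := Φ.mono (rangeMap_prefix o h) h2
    rw [h3] at h1
    exact (Option.some_inj.1 h1).symm

lemma evalsTo_value {Φ : TuringFunctional} {o Z : ℕ → ℕ} (hev : Φ.evalsTo o Z)
    {a k x : ℕ} (h : Φ.approx ((List.range a).map o) k = some x) : x = Z k := by
  rcases hev k with ⟨m, hm⟩
  exact approx_unique Φ o h hm

/- ================= treeCode helpers ================= -/

lemma treeCode_encode (T : List Bool → Bool) (l : List Bool) :
    treeCode T (Encodable.encode l) = Bool.toNat (T l) := by
  unfold treeCode
  rw [Encodable.encodek]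

/-- All strings decoded from codes below `m`. -/
def decSet (m : ℕ) : Finset (List Bool) :=
  (Finset.range m).biUnion fun e => (Encodable.decode (α := List Bool) e).toFinset

lemma mem_decSet {m e : ℕ} {l : List Bool} (he : e < m)
    (hd : Encodable.decode (α := List Bool) e = some l) : l ∈ decSet m := by
  refine Finset.mem_biUnion.2 ⟨e, Finset.mem_range.2 he, ?_⟩
  simp [hd]

lemma treeCode_eq_of_agree {T₁ T₂ : List Bool → Bool} {m e : ℕ} (he : e < m)
    (h : ∀ l ∈ decSet m, T₁ l = T₂ l) : treeCode T₁ e = treeCode T₂ e := by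
  unfold treeCode
  cases hd : Encodable.decode (α := List Bool) e with
  | none => rfl
  | some l =>
    show (T₁ l).toNat = (T₂ l).toNat
    rw [h l (mem_decSet he hd)]

lemma join2_prefix_eq {T₁ T₂ : List Bool → Bool} {X₁ X₂ : ℕ → Bool} {m : ℕ}
    (hT : ∀ l ∈ decSet m, T₁ l = T₂ l) (hX : ∀ i < m, X₁ i = X₂ i) :
    (List.range m).map (join2 (treeCode T₁) (bc X₁)) =
      (List.range m).map (join2 (treeCode T₂) (bc X₂)) := by
  apply mapRange_congr
  intro j hj
  have hj2 : j / 2 < m := lt_of_le_of_lt (Nat.div_le_self j 2) hj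
  unfold join2
  split
  · exact treeCode_eq_of_agree hj2 hT
  · unfold bc; rw [hX _ hj2]

lemma levelCard_congr {T₁ T₂ : List Bool → Bool} {n : ℕ}
    (h : ∀ w : Fin n → Bool, T₁ (List.ofFn w) = T₂ (List.ofFn w)) :
    levelCard T₁ n = levelCard T₂ n := by
  unfold levelCard
  congr 1
  apply Finset.filter_congr
  intro w _
  rw [h w]

lemma isTree_take {T : List Bool → Bool} (hT : IsTreeB T) {l : List Bool}
    (h : T l = true) (j : ℕ) : T (l.take j) = true :=
  hT l h _ (List.take_prefix j l)

/- ================= counting helpers ================= -/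

lemma restrict_card_le {N L : ℕ} (hL : L ≤ N) (s : Finset (Fin N → Bool))
    (E : Finset (Fin L → Bool))
    (hres : ∀ wv ∈ s, (fun i : Fin L => wv (Fin.castLE hL i)) ∈ E) :
    s.card ≤ 2 ^ (N - L) * E.card := by
  have himg : s.image (fun wv : Fin N → Bool => fun i : Fin L => wv (Fin.castLE hL i)) ⊆ E := by
    intro a ha
    rcases Finset.mem_image.1 ha with ⟨wv, hwv, rfl⟩
    exact hres wv hwv
  have hfib : ∀ a ∈ s.image (fun wv : Fin N → Bool => fun i : Fin L => wv (Fin.castLE hL i)),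
      (s.filter fun wv => (fun i : Fin L => wv (Fin.castLE hL i)) = a).card ≤ 2 ^ (N - L) := by
    intro a _
    have : (s.filter fun wv => (fun i : Fin L => wv (Fin.castLE hL i)) = a).card ≤
        (Finset.univ : Finset (Fin (N - L) → Bool)).card := by
      apply Finset.card_le_card_of_injOn (fun wv => fun i : Fin (N - L) => wv ⟨L + i.1, by omega⟩)
      · intro wv _; exact Finset.mem_univ _
      · intro wv1 h1 wv2 h2 heq
        simp only [Finset.coe_filter, Set.mem_setOf_eq] at h1 h2
        funext i
        rcases lt_or_ge i.1 L with hi | hi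
        · have e1 := congrFun h1.2 ⟨i.1, hi⟩
          have e2 := congrFun h2.2 ⟨i.1, hi⟩
          have harg : (Fin.castLE hL ⟨i.1, hi⟩ : Fin N) = i := by
            apply Fin.ext; rfl
          rw [harg] at e1 e2
          rw [e1, e2]
        · have hlt : i.1 - L < N - L := by omega
          have := congrFun heq ⟨i.1 - L, hlt⟩
          simp only at this
          have harg : (⟨L + (i.1 - L), by omega⟩ : Fin N) = i := by
            apply Fin.ext; simp; omega
          rw [harg] at this
          exact this
    calc (s.filter fun wv => (fun i : Fin L => wv (Fin.castLE hL i)) = a).card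
        ≤ (Finset.univ : Finset (Fin (N - L) → Bool)).card := this
      _ = 2 ^ (N - L) := by
          rw [Finset.card_univ, Fintype.card_fun, Fintype.card_bool, Fintype.card_fin]
  calc s.card ≤ 2 ^ (N - L) * (s.image _).card := Finset.card_le_mul_card_image s _ hfib
    _ ≤ 2 ^ (N - L) * E.card := by
        exact Nat.mul_le_mul_left _ (Finset.card_le_card himg)

/-- top-k selection -/
lemma exists_topk {α : Type*} [DecidableEq α] (f : α → ℕ) :
    ∀ (k : ℕ) (s : Finset α), k ≤ s.card → ∃ K ⊆ s, K.card = k ∧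
      ∀ σ ∈ s \ K, ∀ τ ∈ K, f σ ≤ f τ := by
  intro k
  induction k with
  | zero => intro s _; exact ⟨∅, Finset.empty_subset _, rfl, by simp⟩
  | succ k ih =>
    intro s hk
    have hne : s.Nonempty := Finset.card_pos.1 (by omega)
    rcases Finset.exists_max_image s f hne with ⟨τ₀, hτ₀s, hτ₀max⟩
    have hcard : k ≤ (s.erase τ₀).card := by
      rw [Finset.card_erase_of_mem hτ₀s]; omega
    rcases ih (s.erase τ₀) hcard with ⟨K', hK's, hK'card, hK'prop⟩
    refine ⟨insert τ₀ K', ?_, ?_, ?_⟩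
    · intro x hx
      rcases Finset.mem_insert.1 hx with rfl | hx'
      · exact hτ₀s
      · exact Finset.erase_subset _ _ (hK's hx')
    · rw [Finset.card_insert_of_notMem (fun hc => (Finset.notMem_erase τ₀ s) (hK's hc)),
        hK'card]
    · intro σ hσ τ hτ
      have hσs : σ ∈ s := (Finset.mem_sdiff.1 hσ).1
      have hσn : σ ∉ insert τ₀ K' := (Finset.mem_sdiff.1 hσ).2
      rcases Finset.mem_insert.1 hτ with rfl | hτ'
      · exact hτ₀max σ hσs
      · apply hK'prop σ _ τ hτ'
        refine Finset.mem_sdiff.2 ⟨Finset.mem_erase.2 ⟨?_, hσs⟩, ?_⟩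
        · intro hc; exact hσn (hc ▸ Finset.mem_insert_self _ _)
        · intro hc; exact hσn (Finset.mem_insert_of_mem hc)

/- ================= path building (König via ultrafilter) ================= -/

lemma exists_path {T' : List Bool → Bool} (htree : IsTreeB T') {L : ℕ} (w : ℕ → Bool)
    (hM : ∀ M : ℕ, ∃ g : ℕ → Bool, (∀ i < L, g i = w i) ∧
      T' ((List.range (L + M)).map g) = true) :
    ∃ X : ℕ → Bool, pathB T' X ∧ ∀ i < L, X i = w i := by
  choose g hg1 hg2 using hM
  refine ⟨fun i => ulim (fun M => g M i), ?_, ?_⟩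
  · intro L'
    have hagree := ulim_agree (fun M i => g M i) (Finset.range L')
    have hbig := Filter.inter_mem hagree (cofinite_mem L')
    rcases UU_nonempty hbig with ⟨M, hM1, hM2⟩
    simp only [Set.mem_setOf_eq] at hM1 hM2
    have heq : (List.range L').map (fun i => ulim (fun M => g M i)) =
        (List.range L').map (g M) := by
      apply mapRange_congr
      intro i hi
      exact (hM1 i (Finset.mem_range.2 hi)).symm
    rw [heq]
    have heq2 : (List.range L').map (g M) = ((List.range (L + M)).map (g M)).take L' := by
      rw [← List.map_take, List.take_range, min_eq_left (by omega : L' ≤ L + M)]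
    rw [heq2]
    exact isTree_take htree (hg2 M) L'
  · intro i hi
    exact ulim_const (fun M => hg1 M i hi)

lemma take_ofFn {j n : ℕ} (hn : n ≤ j) (wv : Fin j → Bool) :
    (List.ofFn wv).take n = List.ofFn (fun i : Fin n => wv (Fin.castLE hn i)) := by
  apply List.ext_getElem
  · simp [Nat.min_eq_left hn]
  · intro i h1 h2
    rw [List.getElem_take, List.getElem_ofFn, List.getElem_ofFn]
    rfl

/- ================= uniform modulus via ultrafilter compactness ================= -/

lemma uniform_modulus (Φ Ψ : TuringFunctional) (p q : ℚ)
    (H : ∀ T : List Bool → Bool, IsTreeB T → (∀ n, p * 2 ^ n ≤ (levelCard T n : ℚ)) →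
      ∃ T' : List Bool → Bool, IsTreeB T' ∧
        (∀ n, q * 2 ^ n ≤ (levelCard T' n : ℚ)) ∧
        Φ.evalsTo (treeCode T) (treeCode T') ∧
        ∀ X : ℕ → Bool, pathB T' X →
          ∃ Y : ℕ → Bool, Ψ.evalsTo (join2 (treeCode T) (bc X)) (bc Y) ∧ pathB T Y)
    (nOut : ℕ) :
    ∃ v : ℕ, ∀ T X, IsTreeB T → (∀ n, p * 2 ^ n ≤ (levelCard T n : ℚ)) →
      (∃ T', Φ.evalsTo (treeCode T) (treeCode T') ∧ pathB T' X) →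
      ∀ k, k < nOut → (Ψ.approx ((List.range v).map (join2 (treeCode T) (bc X))) k).isSome := by
  by_contra hcon
  push_neg at hcon
  choose T X htree hdens hgood k hklt hfail using hcon
  choose T' hT'ev hT'path using hgood
  rcases ulim_pigeonhole hklt with ⟨ks, hkslt, hksU⟩
  -- the limit instance
  set T₀ : List Bool → Bool := fun l => ulim (fun v => T v l) with hT₀def
  set X₀ : ℕ → Bool := fun i => ulim (fun v => X v i) with hX₀def
  have htree₀ : IsTreeB T₀ := by
    intro l hl l' hpf
    have hS : {v | T v l = true} ∈ UU := (ulim_true_iff _).1 hl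
    refine (ulim_true_iff _).2 (Filter.mem_of_superset hS ?_)
    intro v hv
    exact htree v l hv l' hpf
  have hdens₀ : ∀ n, p * 2 ^ n ≤ (levelCard T₀ n : ℚ) := by
    intro n'
    have hA := ulim_agree (fun v l => T v l)
      ((Finset.univ : Finset (Fin n' → Bool)).image List.ofFn)
    rcases UU_nonempty hA with ⟨v₀, hv₀⟩
    simp only [Set.mem_setOf_eq] at hv₀
    have : levelCard T₀ n' = levelCard (T v₀) n' := by
      apply levelCard_congr
      intro w
      exact (hv₀ (List.ofFn w) (Finset.mem_image_of_mem _ (Finset.mem_univ w))).symm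
    rw [this]
    exact hdens v₀ n'
  rcases H T₀ htree₀ hdens₀ with ⟨T'₀, _, _, hev₀, hback₀⟩
  have hpath₀ : pathB T'₀ X₀ := by
    intro L
    set l : List Bool := (List.range L).map X₀ with hldef
    set e : ℕ := Encodable.encode l with hedef
    rcases hev₀ e with ⟨m, hm⟩
    have hA1 := ulim_agree (fun v l' => T v l') (decSet m)
    have hA2 := ulim_agree (fun v i => X v i) (Finset.range L)
    rcases UU_nonempty (Filter.inter_mem hA1 hA2) with ⟨v, hv1, hv2⟩
    simp only [Set.mem_setOf_eq] at hv1 hv2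
    have hagree : ∀ l' ∈ decSet m, T v l' = T₀ l' := fun l' hl' => hv1 l' hl'
    have claim1 : (List.range m).map (treeCode (T v)) = (List.range m).map (treeCode T₀) := by
      apply mapRange_congr
      intro e' he'
      exact treeCode_eq_of_agree he' hagree
    rw [← claim1] at hm
    have hval : treeCode T'₀ e = treeCode (T' v) e := evalsTo_value (hT'ev v) hm
    have hXl : (List.range L).map (X v) = l := by
      rw [hldef]
      apply mapRange_congr
      intro i hi
      exact hv2 i (Finset.mem_range.2 hi)
    have htrue : T' v l = true := by rw [← hXl]; exact hT'path v L
    have : treeCode (T' v) e = 1 := by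
      rw [hedef, treeCode_encode, htrue]
      rfl
    rw [this] at hval
    have := treeCode_encode T'₀ l
    rw [← hedef] at this
    rw [hval] at this
    cases hb : T'₀ l
    · rw [hb] at this; exact absurd this.symm (by norm_num)
    · rfl
  rcases hback₀ X₀ hpath₀ with ⟨Y₀, hYev, _⟩
  rcases hYev ks with ⟨ms, hms⟩
  have hA1 := ulim_agree (fun v l' => T v l') (decSet ms)
  have hA2 := ulim_agree (fun v i => X v i) (Finset.range ms)
  have hbig := Filter.inter_mem (Filter.inter_mem (Filter.inter_mem hA1 hA2) hksU)
    (cofinite_mem ms)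
  rcases UU_nonempty hbig with ⟨v, ⟨⟨hv1, hv2⟩, hv3⟩, hv4⟩
  simp only [Set.mem_setOf_eq] at hv1 hv2 hv3 hv4
  have claim2 : (List.range ms).map (join2 (treeCode (T v)) (bc (X v))) =
      (List.range ms).map (join2 (treeCode T₀) (bc X₀)) := by
    apply join2_prefix_eq
    · intro l' hl'; exact hv1 l' hl'
    · intro i hi; exact hv2 i (Finset.mem_range.2 hi)
  rw [← claim2] at hms
  have hfin := Ψ.mono (rangeMap_prefix (join2 (treeCode (T v)) (bc (X v))) hv4) hms
  apply hfail v
  rw [hv3, hfin]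
  rfl

end WWKLAux
end WWKLAux

open WWKLAux in
/-- For positive rationals `p < q < 1`, there is no Weihrauch reduction of `p`-WWKL to
`q`-WWKL: there are no Turing functionals `Φ, Ψ` such that for every tree `T` with
`|T ∩ 2ⁿ| ≥ p·2ⁿ` for all `n`, `Φ(T)` is a tree with `|Φ(T) ∩ 2ⁿ| ≥ q·2ⁿ` for all `n`,
and `Ψ(T ⊕ X)` is an infinite path of `T` for every infinite path `X` of `Φ(T)`. -/
theorem stmt15 (p q : ℚ) (hp : 0 < p) (hpq : p < q) (hq : q < 1) :
    ¬ ∃ Φ Ψ : TuringFunctional,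
      ∀ T : List Bool → Bool, IsTreeB T → (∀ n, p * 2 ^ n ≤ (levelCard T n : ℚ)) →
        ∃ T' : List Bool → Bool, IsTreeB T' ∧
          (∀ n, q * 2 ^ n ≤ (levelCard T' n : ℚ)) ∧
          Φ.evalsTo (treeCode T) (treeCode T') ∧
          ∀ X : ℕ → Bool, pathB T' X →
            ∃ Y : ℕ → Bool, Ψ.evalsTo (join2 (treeCode T) (bc X)) (bc Y) ∧ pathB T Y := by
  rintro ⟨Φ, Ψ, H⟩
  have hp1 : p < 1 := lt_trans hpq hq
  have hqp : (0:ℚ) < q - p := by linarith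
  -- choose the level n
  obtain ⟨n, hn⟩ : ∃ n : ℕ, 1 < (q - p) * 2 ^ n := by
    obtain ⟨n, hn⟩ := pow_unbounded_of_one_lt (R := ℚ) (1 / (q - p)) one_lt_two
    refine ⟨n, ?_⟩
    rw [div_lt_iff₀ hqp] at hn
    calc (1:ℚ) < 2 ^ n * (q - p) := hn
      _ = (q - p) * 2 ^ n := by ring
  -- the uniform modulus
  obtain ⟨v, hmod⟩ := uniform_modulus Φ Ψ p q H n
  -- depth beyond which trees are modified
  set Dlen : ℕ :=
    (Finset.range v).sup (fun e => ((Encodable.decode (α := List Bool) e).getD []).length)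
    with hDlen
  set D : ℕ := n + v + 1 + Dlen with hD
  have hDdec : ∀ l ∈ decSet v, l.length < D := by
    intro l hl
    rcases Finset.mem_biUnion.1 hl with ⟨e, he, hel⟩
    have hdec : Encodable.decode (α := List Bool) e = some l := by
      simpa using hel
    have hlen : ((Encodable.decode (α := List Bool) e).getD []).length = l.length := by
      rw [hdec]; rfl
    have hle : l.length ≤ Dlen := by
      rw [hDlen, ← hlen]
      exact Finset.le_sup (f := fun e => ((Encodable.decode (α := List Bool) e).getD []).length) he
    omega
  have hnD : n < D := by omega
  set LL : ℕ := D + v + n with hLLdef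
  have hvLL : v ≤ LL := by omega
  -- canonical extension of a word of length LL
  set wext : (Fin LL → Bool) → ℕ → Bool :=
    fun w i => if h : i < LL then w ⟨i, h⟩ else false with hwext
  -- the committed output bits, as a function of the word only
  set bits : (Fin LL → Bool) → ℕ → Option ℕ :=
    fun w k => Ψ.approx
      ((List.range v).map (join2 (treeCode (fun _ => true)) (bc (wext w)))) k with hbits
  set cmap : (Fin LL → Bool) → (Fin n → Bool) :=
    fun w k => decide ((bits w k.1).getD 0 = 1) with hcmap
  set fib : (Fin n → Bool) → ℕ :=
    fun σ => (Finset.univ.filter fun w : Fin LL → Bool => cmap w = σ).card with hfib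
  -- the number of sealed nodes
  set k0 : ℕ := ⌊(1 - p) * 2 ^ n⌋₊ with hk0
  have h1p : (0:ℚ) ≤ (1 - p) * 2 ^ n := by
    have : (0:ℚ) ≤ 1 - p := by linarith
    positivity
  have hk0le : (k0 : ℚ) ≤ (1 - p) * 2 ^ n := Nat.floor_le h1p
  have hk0card : k0 ≤ 2 ^ n := by
    have h2 : ((k0 : ℚ)) ≤ ((2 ^ n : ℕ) : ℚ) := by
      push_cast
      calc (k0:ℚ) ≤ (1 - p) * 2 ^ n := hk0le
        _ ≤ 1 * 2 ^ n := by
            apply mul_le_mul_of_nonneg_right (by linarith) (by positivity)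
        _ = 2 ^ n := by ring
    exact_mod_cast h2
  have hunivcard : (Finset.univ : Finset (Fin n → Bool)).card = 2 ^ n := by
    rw [Finset.card_univ, Fintype.card_fun, Fintype.card_bool, Fintype.card_fin]
  obtain ⟨K, hKsub, hKcard, hKtop⟩ := exists_topk fib k0 Finset.univ (by rw [hunivcard]; exact hk0card)
  set KL : Finset (List Bool) := K.image List.ofFn with hKL
  -- the sealed tree
  set TK : List Bool → Bool :=
    fun l => !(decide (D ≤ l.length) && decide (l.take n ∈ KL)) with hTK
  have hTKiff : ∀ l, TK l = true ↔ ¬(D ≤ l.length ∧ l.take n ∈ KL) := by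
    intro l
    rw [hTK]
    by_cases h1 : D ≤ l.length <;> by_cases h2 : l.take n ∈ KL <;> simp [h1, h2]
  have hTKshort : ∀ l : List Bool, l.length < D → TK l = true := by
    intro l hl
    rw [hTKiff]
    rintro ⟨h1, -⟩
    omega
  have htreeTK : IsTreeB TK := by
    intro l hl l' hpf
    by_cases hlen : l'.length < D
    · exact hTKshort l' hlen
    · push_neg at hlen
      rw [hTKiff]
      rintro ⟨-, htk⟩
      have hlen2 : D ≤ l.length := le_trans hlen (List.IsPrefix.length_le hpf)
      have htake : l'.take n = l.take n := prefix_take_eq hpf (by omega)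
      rw [hTKiff] at hl
      exact hl ⟨hlen2, by rw [← htake]; exact htk⟩
  have hTKdens : ∀ j, p * 2 ^ j ≤ (levelCard TK j : ℚ) := by
    intro j
    by_cases hj : j < D
    · have : levelCard TK j = 2 ^ j := by
        unfold levelCard
        rw [Finset.filter_true_of_mem, Finset.card_univ, Fintype.card_fun,
          Fintype.card_bool, Fintype.card_fin]
        intro w _
        apply hTKshort
        simpa using hj
      rw [this]
      push_cast
      calc p * 2 ^ j ≤ 1 * 2 ^ j := by
            apply mul_le_mul_of_nonneg_right (by linarith) (by positivity)
        _ = 2 ^ j := by ring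
    · push_neg at hj
      have hnj : n ≤ j := by omega
      set bad : Finset (Fin j → Bool) :=
        Finset.univ.filter (fun wv : Fin j → Bool => (List.ofFn wv).take n ∈ KL) with hbad
      have hsplit : levelCard TK j = 2 ^ j - bad.card := by
        unfold levelCard
        have hiff : ∀ wv : Fin j → Bool,
            (TK (List.ofFn wv) = true) ↔ ¬((List.ofFn wv).take n ∈ KL) := by
          intro wv
          rw [hTKiff]
          constructor
          · intro h1 h2; exact h1 ⟨by simpa using hj, h2⟩
          · intro h1 h2; exact h1 h2.2
        have : (Finset.univ.filter fun wv : Fin j → Bool => TK (List.ofFn wv) = true)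
            = Finset.univ.filter (fun wv : Fin j → Bool =>
                ¬((List.ofFn wv).take n ∈ KL)) := by
          apply Finset.filter_congr
          intro wv _
          simp only [hiff]
        rw [this]
        have hnot : Finset.univ.filter (fun wv : Fin j → Bool =>
            ¬((List.ofFn wv).take n ∈ KL)) = Finset.univ \ bad := by
          rw [hbad]
          exact Finset.filter_not _ _
        rw [hnot, Finset.card_sdiff_of_subset (Finset.filter_subset _ _)]
        congr 1
        rw [Finset.card_univ, Fintype.card_fun, Fintype.card_bool, Fintype.card_fin]
      have hbadle : bad.card ≤ 2 ^ (j - n) * k0 := by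
        have := restrict_card_le hnj bad K ?_
        · calc bad.card ≤ 2 ^ (j - n) * K.card := this
            _ = 2 ^ (j - n) * k0 := by rw [hKcard]
        · intro wv hwv
          have hmem : (List.ofFn wv).take n ∈ KL := (Finset.mem_filter.1 hwv).2
          rw [take_ofFn hnj] at hmem
          rcases Finset.mem_image.1 hmem with ⟨σ, hσ, hσeq⟩
          have : σ = fun i : Fin n => wv (Fin.castLE hnj i) := List.ofFn_injective hσeq
          rwa [← this]
      have hbadlecard : bad.card ≤ 2 ^ j := by
        calc bad.card ≤ (Finset.univ : Finset (Fin j → Bool)).card :=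
              Finset.card_le_card (Finset.filter_subset _ _)
          _ = 2 ^ j := by
              rw [Finset.card_univ, Fintype.card_fun, Fintype.card_bool, Fintype.card_fin]
      rw [hsplit]
      have hcast : ((2 ^ j - bad.card : ℕ) : ℚ) = (2 ^ j : ℚ) - bad.card := by
        push_cast [Nat.cast_sub hbadlecard]
        ring
      rw [hcast]
      have hbadq : (bad.card : ℚ) ≤ (1 - p) * 2 ^ j := by
        calc (bad.card : ℚ) ≤ ((2 ^ (j - n) * k0 : ℕ) : ℚ) := by exact_mod_cast hbadle
          _ = (2 ^ (j - n) : ℚ) * k0 := by push_cast; ring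
          _ ≤ (2 ^ (j - n) : ℚ) * ((1 - p) * 2 ^ n) := by
              apply mul_le_mul_of_nonneg_left hk0le (by positivity)
          _ = (1 - p) * (2 ^ (j - n) * 2 ^ n) := by ring
          _ = (1 - p) * 2 ^ j := by
              rw [← pow_add]
              congr 2
              omega
      linarith
  -- apply the reduction to TK
  obtain ⟨T', hT'tree, hT'dens, hT'ev, hT'back⟩ := H TK htreeTK hTKdens
  -- the sets of extendible words at level LL
  set E : ℕ → Finset (Fin LL → Bool) := fun M =>
    Finset.univ.filter (fun w : Fin LL → Bool => ∃ g : ℕ → Bool,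
      (∀ i : Fin LL, g i.1 = w i) ∧ T' ((List.range (LL + M)).map g) = true) with hE
  have hEanti : ∀ M₁ M₂, M₁ ≤ M₂ → E M₂ ⊆ E M₁ := by
    intro M₁ M₂ hM w hw
    rcases Finset.mem_filter.1 hw with ⟨-, g, hg1, hg2⟩
    refine Finset.mem_filter.2 ⟨Finset.mem_univ _, g, hg1, ?_⟩
    have : (List.range (LL + M₁)).map g = ((List.range (LL + M₂)).map g).take (LL + M₁) := by
      rw [← List.map_take, List.take_range, min_eq_left (by omega : LL + M₁ ≤ LL + M₂)]
    rw [this]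
    exact isTree_take hT'tree hg2 _
  have hEcard : ∀ M, q * 2 ^ LL ≤ ((E M).card : ℚ) := by
    intro M
    have hres : ∀ wv ∈ (Finset.univ.filter
        (fun wv : Fin (LL + M) → Bool => T' (List.ofFn wv) = true)),
        (fun i : Fin LL => wv (Fin.castLE (by omega : LL ≤ LL + M) i)) ∈ E M := by
      intro wv hwv
      have hwv2 : T' (List.ofFn wv) = true := (Finset.mem_filter.1 hwv).2
      refine Finset.mem_filter.2 ⟨Finset.mem_univ _, ?_⟩
      refine ⟨fun i => if h : i < LL + M then wv ⟨i, h⟩ else false, ?_, ?_⟩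
      · intro i
        have hi : i.1 < LL + M := by omega
        simp only [hi, dif_pos]
        exact congrArg wv (Fin.ext rfl)
      · have : (List.range (LL + M)).map
            (fun i => if h : i < LL + M then wv ⟨i, h⟩ else false) = List.ofFn wv := by
          apply List.ext_getElem
          · simp
          · intro i h1 h2
            simp only [List.getElem_map, List.getElem_range, List.getElem_ofFn]
            have hi : i < LL + M := by simpa using h2
            simp [hi]
        rw [this]
        exact hwv2
    have hcount := restrict_card_le (by omega : LL ≤ LL + M)
      (Finset.univ.filter (fun wv : Fin (LL + M) → Bool => T' (List.ofFn wv) = true))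
      (E M) hres
    have hsub : (LL + M) - LL = M := by omega
    rw [hsub] at hcount
    have hlc : levelCard T' (LL + M) ≤ 2 ^ M * (E M).card := hcount
    have hq1 : q * 2 ^ (LL + M) ≤ ((2 ^ M * (E M).card : ℕ) : ℚ) := by
      calc q * 2 ^ (LL + M) ≤ (levelCard T' (LL + M) : ℚ) := hT'dens (LL + M)
        _ ≤ ((2 ^ M * (E M).card : ℕ) : ℚ) := by exact_mod_cast hlc
    have h2M : (0:ℚ) < 2 ^ M := by positivity
    have hq2 : (q * 2 ^ LL) * 2 ^ M ≤ ((E M).card : ℚ) * 2 ^ M := by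
      calc (q * 2 ^ LL) * 2 ^ M = q * 2 ^ (LL + M) := by rw [pow_add]; ring
        _ ≤ ((2 ^ M * (E M).card : ℕ) : ℚ) := hq1
        _ = ((E M).card : ℚ) * 2 ^ M := by push_cast; ring
    exact le_of_mul_le_mul_right hq2 h2M
  -- the eventually stable set of extendible words
  have hrangene : (Set.range fun M => (E M).card).Nonempty := ⟨(E 0).card, ⟨0, rfl⟩⟩
  obtain ⟨M₀, hM₀⟩ : ∃ M₀, (E M₀).card = sInf (Set.range fun M => (E M).card) := by
    rcases Nat.sInf_mem hrangene with ⟨M₀, hM₀⟩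
    exact ⟨M₀, hM₀⟩
  set A : Finset (Fin LL → Bool) := E M₀ with hA
  have hAsub : ∀ M, A ⊆ E M := by
    intro M
    rcases le_total M M₀ with h | h
    · exact hEanti M M₀ h
    · have h1 : E M ⊆ E M₀ := hEanti M₀ M h
      have h2 : (E M₀).card ≤ (E M).card := by
        rw [hM₀]
        exact Nat.sInf_le ⟨M, rfl⟩
      rw [hA, ← Finset.eq_of_subset_of_card_le h1 h2]
  have hAcard : q * 2 ^ LL ≤ (A.card : ℚ) := hEcard M₀
  -- every extendible word commits outside K
  have hwK : ∀ w ∈ A, cmap w ∉ K := by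
    intro w hw
    have hM : ∀ M : ℕ, ∃ g : ℕ → Bool, (∀ i < LL, g i = wext w i) ∧
        T' ((List.range (LL + M)).map g) = true := by
      intro M
      rcases Finset.mem_filter.1 (hAsub M hw) with ⟨-, g, hg1, hg2⟩
      refine ⟨g, ?_, hg2⟩
      intro i hi
      rw [hwext]
      simp only [hi, dif_pos]
      exact hg1 ⟨i, hi⟩
    obtain ⟨Xw, hXwpath, hXwagree⟩ := exists_path hT'tree (wext w) hM
    obtain ⟨Y, hYev, hYpath⟩ := hT'back Xw hXwpath
    have horacle : (List.range v).map (join2 (treeCode TK) (bc Xw)) =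
        (List.range v).map (join2 (treeCode (fun _ => true)) (bc (wext w))) := by
      apply join2_prefix_eq
      · intro l hl
        exact hTKshort l (hDdec l hl)
      · intro i hi
        exact hXwagree i (lt_of_lt_of_le hi hvLL)
    have hbitsY : ∀ k : Fin n, bits w k.1 = some (bc Y k.1) := by
      intro k
      have hsome := hmod TK Xw htreeTK hTKdens ⟨T', hT'ev, hXwpath⟩ k.1 k.2
      rcases Option.isSome_iff_exists.1 hsome with ⟨b, hb⟩
      have hbY : b = bc Y k.1 := evalsTo_value hYev hb
      rw [hbits]
      simp only
      rw [← horacle, hb, hbY]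
    have hcmapY : cmap w = fun k : Fin n => Y k.1 := by
      funext k
      rw [hcmap]
      simp only [hbitsY k]
      unfold bc
      cases hYk : Y k.1
      · simp
      · simp
    have hYn : (List.range n).map Y ∉ KL := by
      have hD' := hYpath D
      rw [hTKiff] at hD'
      have hlen : ((List.range D).map Y).length = D := by simp
      have htk : ¬(((List.range D).map Y).take n ∈ KL) := by
        intro hc
        exact hD' ⟨by omega, hc⟩
      have : ((List.range D).map Y).take n = (List.range n).map Y := by
        rw [← List.map_take, List.take_range, min_eq_left (le_of_lt hnD)]
      rwa [this] at htk
    intro hc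
    apply hYn
    have : List.ofFn (cmap w) ∈ KL := Finset.mem_image_of_mem _ hc
    rw [hcmapY] at this
    have heq : List.ofFn (fun k : Fin n => Y k.1) = (List.range n).map Y :=
      ofFn_eq_mapRange n Y
    rwa [heq] at this
  -- final counting
  set out : Finset (Fin n → Bool) := Finset.univ \ K with hout
  have hmemout : ∀ w ∈ A, cmap w ∈ out := by
    intro w hw
    exact Finset.mem_sdiff.2 ⟨Finset.mem_univ _, hwK w hw⟩
  have hAfib : A.card ≤ ∑ σ ∈ out, fib σ := by
    rw [Finset.card_eq_sum_card_fiberwise hmemout]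
    apply Finset.sum_le_sum
    intro σ _
    apply Finset.card_le_card
    apply Finset.filter_subset_filter
    exact Finset.subset_univ A
  have htotal : (∑ σ ∈ out, fib σ) + (∑ σ ∈ K, fib σ) = 2 ^ LL := by
    have h1 : (Finset.univ : Finset (Fin LL → Bool)).card =
        ∑ σ ∈ (Finset.univ : Finset (Fin n → Bool)),
          (Finset.univ.filter fun w : Fin LL → Bool => cmap w = σ).card :=
      Finset.card_eq_sum_card_fiberwise (fun w _ => Finset.mem_univ (cmap w))
    have h2 : ∑ σ ∈ out, fib σ + ∑ σ ∈ K, fib σ =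
        ∑ σ ∈ (Finset.univ : Finset (Fin n → Bool)), fib σ := by
      rw [hout]
      exact Finset.sum_sdiff hKsub
    rw [h2]
    have h3 : ∑ σ ∈ (Finset.univ : Finset (Fin n → Bool)), fib σ =
        (Finset.univ : Finset (Fin LL → Bool)).card := by
      rw [h1]
    rw [h3, Finset.card_univ, Fintype.card_fun, Fintype.card_bool, Fintype.card_fin]
  have hdouble : (∑ σ ∈ out, fib σ) * k0 ≤ out.card * (∑ τ ∈ K, fib τ) := by
    calc (∑ σ ∈ out, fib σ) * k0 = ∑ σ ∈ out, fib σ * k0 := by rw [Finset.sum_mul]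
      _ = ∑ σ ∈ out, ∑ τ ∈ K, fib σ := by
          apply Finset.sum_congr rfl
          intro σ _
          rw [Finset.sum_const, smul_eq_mul, hKcard, mul_comm]
      _ ≤ ∑ σ ∈ out, ∑ τ ∈ K, fib τ := by
          apply Finset.sum_le_sum
          intro σ hσ
          apply Finset.sum_le_sum
          intro τ hτ
          exact hKtop σ (by rwa [hout] at hσ) τ hτ
      _ = out.card * (∑ τ ∈ K, fib τ) := by
          rw [Finset.sum_const, smul_eq_mul]
  have houtcard : out.card = 2 ^ n - k0 := by
    rw [hout, Finset.card_sdiff_of_subset hKsub, hunivcard, hKcard]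
  have hk0out : k0 + out.card = 2 ^ n := by
    rw [houtcard]
    omega
  have hmain : A.card * 2 ^ n ≤ out.card * 2 ^ LL := by
    calc A.card * 2 ^ n = A.card * k0 + A.card * out.card := by rw [← hk0out]; ring
      _ ≤ (∑ σ ∈ out, fib σ) * k0 + (∑ σ ∈ out, fib σ) * out.card := by
          exact Nat.add_le_add (Nat.mul_le_mul_right _ hAfib) (Nat.mul_le_mul_right _ hAfib)
      _ ≤ out.card * (∑ τ ∈ K, fib τ) + (∑ σ ∈ out, fib σ) * out.card :=
          Nat.add_le_add_right hdouble _
      _ = out.card * ((∑ σ ∈ out, fib σ) + (∑ τ ∈ K, fib τ)) := by ring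
      _ = out.card * 2 ^ LL := by rw [htotal]
  have houtq : (out.card : ℚ) < q * 2 ^ n := by
    have hfl : (1 - p) * 2 ^ n - 1 < (k0 : ℚ) := by
      rw [hk0]
      exact Nat.sub_one_lt_floor _
    have hocast : (out.card : ℚ) = (2 ^ n : ℚ) - k0 := by
      rw [houtcard, Nat.cast_sub hk0card]
      push_cast
      ring
    rw [hocast]
    have h2n : (1:ℚ) < (q - p) * 2 ^ n := hn
    linarith
  have hfinal : q * 2 ^ LL * 2 ^ n ≤ (out.card : ℚ) * 2 ^ LL := by
    calc q * 2 ^ LL * 2 ^ n ≤ (A.card : ℚ) * 2 ^ n := by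
          apply mul_le_mul_of_nonneg_right hAcard (by positivity)
      _ ≤ (out.card : ℚ) * 2 ^ LL := by exact_mod_cast hmain
  have hcontra : (out.card : ℚ) * 2 ^ LL < q * 2 ^ n * 2 ^ LL :=
    mul_lt_mul_of_pos_right houtq (by positivity)
  have hlt : q * 2 ^ LL * 2 ^ n < q * 2 ^ LL * 2 ^ n := by
    calc q * 2 ^ LL * 2 ^ n ≤ (out.card : ℚ) * 2 ^ LL := hfinal
      _ < q * 2 ^ n * 2 ^ LL := hcontra
      _ = q * 2 ^ LL * 2 ^ n := by ring
  exact absurd hlt (lt_irrefl _)
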